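/- Assume the bias-only noise model. If every zero-objective feasible point (X̂, Y, B) of the cooperative SDP relaxation satisfies Y = X̂X̂ᵀ (i.e., the maximum-rank solution of the SDP has rank k), then the zero-objective solution is unique in X̂: any two zero-objective feasible points (X₁, Y₁, B₁) and (X₂, Y₂, B₂) satisfy X₁ = X₂. -/

import Mathlib

open Matrix RealInnerProductSpace

/-- The Gram matrix `X̂X̂ᵀ` of a configuration of points `xhat` (its entries are the
inner products of the rows of `X̂`). -/
noncomputable def gramMatrix {N k : ℕ} (xhat : Fin N → EuclideanSpace ℝ (Fin k)) :
    Matrix (Fin N) (Fin N) ℝ :=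
  Matrix.of fun i j => ⟪xhat i, xhat j⟫

/-- Zero-objective feasible point `(X̂, Y, B)` of the cooperative SDP relaxation:
`Y` is symmetric with `Y - X̂X̂ᵀ ⪰ 0`, the bias variables are nonnegative on all edges,
and every term of the objective vanishes: `e_{ij}ᵀ Y e_{ij} - d̃_{ij}² + b_{ij} = 0` on
agent–agent edges and `e_iᵀ Y e_i - 2⟪a_j, X̂ᵀe_i⟫ + ‖a_j‖² - d̃_{ij}² + b_{ij} = 0` on
agent–anchor edges. -/
def ZeroObjFeasible {N M k : ℕ} (a : Fin M → EuclideanSpace ℝ (Fin k))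
    (EX : Set (Fin N × Fin N)) (EA : Set (Fin N × Fin M))
    (dtX : Fin N × Fin N → ℝ) (dtA : Fin N × Fin M → ℝ)
    (xhat : Fin N → EuclideanSpace ℝ (Fin k)) (Y : Matrix (Fin N) (Fin N) ℝ)
    (bX : Fin N × Fin N → ℝ) (bA : Fin N × Fin M → ℝ) : Prop :=
  Y.IsSymm ∧ (Y - gramMatrix xhat).PosSemidef ∧
  (∀ p ∈ EX, 0 ≤ bX p) ∧ (∀ p ∈ EA, 0 ≤ bA p) ∧
  (∀ p ∈ EX,
    (Pi.single p.1 1 - Pi.single p.2 1) ⬝ᵥ (Y *ᵥ (Pi.single p.1 1 - Pi.single p.2 1))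
      - dtX p + bX p = 0) ∧
  (∀ p ∈ EA,
    (Pi.single p.1 (1 : ℝ)) ⬝ᵥ (Y *ᵥ Pi.single p.1 1) - 2 * ⟪a p.2, xhat p.1⟫
      + ‖a p.2‖ ^ 2 - dtA p + bA p = 0)

/-- Bias-only noise model: if every zero-objective feasible point of the cooperative SDP
relaxation has `Y = X̂X̂ᵀ` (i.e. the maximum-rank solution has rank `k`), then the
zero-objective solution is unique in `X̂`. -/
lemma gram_psd {N k : ℕ} (v : Fin N → EuclideanSpace ℝ (Fin k)) :
    (gramMatrix v).PosSemidef := by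
  have : gramMatrix v = (Matrix.of fun i c => v i c) * (Matrix.of fun i c => v i c)ᴴ := by
    ext i j
    simp [gramMatrix, Matrix.mul_apply, PiLp.inner_apply, mul_comm]
  rw [this]
  exact Matrix.posSemidef_self_mul_conjTranspose _

lemma psd_smul {n : ℕ} {M : Matrix (Fin n) (Fin n) ℝ} (hM : M.PosSemidef) {c : ℝ}
    (hc : 0 ≤ c) : (c • M).PosSemidef := by
  constructor
  · have h1 := hM.1
    unfold Matrix.IsHermitian at *
    ext i j
    have h2 := congrFun (congrFun h1 i) j
    simp only [Matrix.conjTranspose_apply, star_trivial] at h2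
    simp only [Matrix.conjTranspose_apply, Matrix.smul_apply, star_trivial, smul_eq_mul, h2]
  · intro y
    have := hM.2 y
    have h : (y.sum fun i xi => y.sum fun j xj => star xi * (c • M) i j * xj)
        = c * (y.sum fun i xi => y.sum fun j xj => star xi * M i j * xj) := by
      simp only [Finsupp.sum, Finset.mul_sum, Matrix.smul_apply, smul_eq_mul]
      refine Finset.sum_congr rfl fun _ _ => Finset.sum_congr rfl fun _ _ => by ring
    rw [h]
    exact mul_nonneg hc this

theorem stmt_9 {N M k : ℕ}
    (x : Fin N → EuclideanSpace ℝ (Fin k)) (a : Fin M → EuclideanSpace ℝ (Fin k))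
    (EX : Set (Fin N × Fin N)) (EA : Set (Fin N × Fin M))
    (b0X : Fin N × Fin N → ℝ) (b0A : Fin N × Fin M → ℝ)
    (hb0X : ∀ p ∈ EX, 0 ≤ b0X p) (hb0A : ∀ p ∈ EA, 0 ≤ b0A p)
    (dtX : Fin N × Fin N → ℝ) (dtA : Fin N × Fin M → ℝ)
    (hdtX : ∀ p ∈ EX, dtX p = ‖x p.1 - x p.2‖ ^ 2 + b0X p)
    (hdtA : ∀ p ∈ EA, dtA p = ‖x p.1 - a p.2‖ ^ 2 + b0A p)
    (hrank : ∀ xhat Y bX bA,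
      ZeroObjFeasible a EX EA dtX dtA xhat Y bX bA → Y = gramMatrix xhat)
    (x₁ x₂ : Fin N → EuclideanSpace ℝ (Fin k)) (Y₁ Y₂ : Matrix (Fin N) (Fin N) ℝ)
    (bX₁ bX₂ : Fin N × Fin N → ℝ) (bA₁ bA₂ : Fin N × Fin M → ℝ)
    (h₁ : ZeroObjFeasible a EX EA dtX dtA x₁ Y₁ bX₁ bA₁)
    (h₂ : ZeroObjFeasible a EX EA dtX dtA x₂ Y₂ bX₂ bA₂) :
    x₁ = x₂ := by
  obtain ⟨hs₁, hp₁, hbx₁, hba₁, hex₁, hea₁⟩ := h₁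
  obtain ⟨hs₂, hp₂, hbx₂, hba₂, hex₂, hea₂⟩ := h₂
  set xm : Fin N → EuclideanSpace ℝ (Fin k) := fun i => (1/2 : ℝ) • (x₁ i + x₂ i) with hxm
  set Ym : Matrix (Fin N) (Fin N) ℝ := (1/2 : ℝ) • (Y₁ + Y₂) with hym
  -- key Gram identity for the midpoint
  have gram_mid : (1/2 : ℝ) • (gramMatrix x₁ + gramMatrix x₂)
      = gramMatrix xm + gramMatrix (fun i => (1/2 : ℝ) • (x₁ i - x₂ i)) := by
    ext i j
    simp only [gramMatrix, Matrix.smul_apply, Matrix.add_apply, Matrix.of_apply, hxm,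
      real_inner_smul_left, real_inner_smul_right, inner_add_left, inner_add_right,
      inner_sub_left, inner_sub_right, smul_eq_mul]
    ring
  have hfeas : ZeroObjFeasible a EX EA dtX dtA xm Ym
      (fun p => (1/2 : ℝ) * (bX₁ p + bX₂ p)) (fun p => (1/2 : ℝ) * (bA₁ p + bA₂ p)) := by
    refine ⟨?_, ?_, ?_, ?_, ?_, ?_⟩
    · unfold Matrix.IsSymm at *
      rw [hym, Matrix.transpose_smul, Matrix.transpose_add, hs₁, hs₂]
    · have : Ym - gramMatrix xm = (1/2 : ℝ) • (Y₁ - gramMatrix x₁)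
          + (1/2 : ℝ) • (Y₂ - gramMatrix x₂)
          + gramMatrix (fun i => (1/2 : ℝ) • (x₁ i - x₂ i)) := by
        have h := gram_mid
        rw [hym]
        ext i j
        have h' := congrFun (congrFun h i) j
        simp only [Matrix.smul_apply, Matrix.add_apply, Matrix.sub_apply, smul_eq_mul] at h' ⊢
        linarith
      rw [this]
      exact ((psd_smul hp₁ (by norm_num)).add (psd_smul hp₂ (by norm_num))).add (gram_psd _)
    · intro p hp; have := hbx₁ p hp; have := hbx₂ p hp; linarith
    · intro p hp; have := hba₁ p hp; have := hba₂ p hp; linarith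
    · intro p hp
      have e1 := hex₁ p hp
      have e2 := hex₂ p hp
      rw [hym]
      simp only [Matrix.smul_mulVec, Matrix.add_mulVec, dotProduct_smul,
        dotProduct_add, smul_eq_mul] at *
      linarith
    · intro p hp
      have e1 := hea₁ p hp
      have e2 := hea₂ p hp
      have hin : ⟪a p.2, xm p.1⟫ = (1/2 : ℝ) * (⟪a p.2, x₁ p.1⟫ + ⟪a p.2, x₂ p.1⟫) := by
        rw [hxm]; simp only [inner_add_right, real_inner_smul_right]
      rw [hym, hin]
      simp only [Matrix.smul_mulVec, Matrix.add_mulVec, dotProduct_smul,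
        dotProduct_add, smul_eq_mul] at *
      linarith
  have g₁ := hrank _ _ _ _ ⟨hs₁, hp₁, hbx₁, hba₁, hex₁, hea₁⟩
  have g₂ := hrank _ _ _ _ ⟨hs₂, hp₂, hbx₂, hba₂, hex₂, hea₂⟩
  have gm := hrank _ _ _ _ hfeas
  have hzero : gramMatrix (fun i => (1/2 : ℝ) • (x₁ i - x₂ i)) = 0 := by
    have : (1/2 : ℝ) • (gramMatrix x₁ + gramMatrix x₂) = gramMatrix xm := by
      rw [← g₁, ← g₂, ← gm, hym]
    rw [this] at gram_mid
    ext i j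
    have := congrFun (congrFun gram_mid i) j
    simp only [Matrix.add_apply, Matrix.zero_apply] at this ⊢
    linarith
  funext i
  have := congrFun (congrFun hzero i) i
  simp only [gramMatrix, Matrix.of_apply, Matrix.zero_apply, real_inner_smul_left,
    real_inner_smul_right] at this
  have h0 : ⟪x₁ i - x₂ i, x₁ i - x₂ i⟫ = 0 := by
    rcases mul_eq_zero.mp this with h | h
    · norm_num at h
    · rcases mul_eq_zero.mp h with h | h
      · norm_num at h
      · exact h
  have := inner_self_eq_zero.mp h0
  have : x₁ i - x₂ i = 0 := this
  linear_combination (norm := abel) this
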